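/- The number of nonzero coefficients of (1+X)^i over ℤ/2ℤ equals 2 raised to the number of 1's in the binary representation of i. -/

import Mathlib

open Polynomial

lemma expand_two_eq_sq (f : Polynomial (ZMod 2)) :
    Polynomial.expand (ZMod 2) 2 f = f ^ 2 := by
  have h := Polynomial.map_frobenius_expand 2 f
  rwa [ZMod.frobenius_zmod, Polynomial.map_id] at h

lemma support_expand_two (f : Polynomial (ZMod 2)) :
    (Polynomial.expand (ZMod 2) 2 f).support = f.support.image (2 * ·) := by
  ext n
  simp only [Polynomial.mem_support_iff, Finset.mem_image,
    Polynomial.coeff_expand (by norm_num : 0 < 2)]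
  constructor
  · intro h
    split_ifs at h with hd
    · exact ⟨n / 2, by simpa using h, by omega⟩
    · simp at h
  · rintro ⟨m, hm, rfl⟩
    simp [Nat.mul_div_cancel_left, hm]

lemma coeff_one_add_X_mul_expand (g : Polynomial (ZMod 2)) (n : ℕ) :
    ((1 + X) * Polynomial.expand (ZMod 2) 2 g).coeff n = g.coeff (n / 2) := by
  rw [add_mul, one_mul, Polynomial.coeff_add]
  rcases Nat.even_or_odd n with ⟨m, rfl⟩ | ⟨m, rfl⟩
  · have h1 : (Polynomial.expand (ZMod 2) 2 g).coeff (m + m) = g.coeff m := by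
      rw [Polynomial.coeff_expand (by norm_num : 0 < 2)]
      simp [show (2 : ℕ) ∣ m + m by omega, show (m + m) / 2 = m by omega]
    have h2 : (X * Polynomial.expand (ZMod 2) 2 g).coeff (m + m) = 0 := by
      rcases Nat.eq_zero_or_pos m with rfl | hm
      · simp
      · rw [show m + m = (m + m - 1) + 1 by omega, Polynomial.coeff_X_mul,
          Polynomial.coeff_expand (by norm_num : 0 < 2)]
        simp [show ¬ (2 : ℕ) ∣ m + m - 1 by omega]
    rw [h1, h2, show (m + m) / 2 = m by omega, add_zero]
  · have h1 : (Polynomial.expand (ZMod 2) 2 g).coeff (2 * m + 1) = 0 := by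
      rw [Polynomial.coeff_expand (by norm_num : 0 < 2)]
      simp [show ¬ (2 : ℕ) ∣ 2 * m + 1 by omega]
    have h2 : (X * Polynomial.expand (ZMod 2) 2 g).coeff (2 * m + 1) = g.coeff m := by
      rw [Polynomial.coeff_X_mul, Polynomial.coeff_expand (by norm_num : 0 < 2)]
      simp [show (2 : ℕ) ∣ 2 * m by omega, show 2 * m / 2 = m by omega]
    rw [h1, h2, show (2 * m + 1) / 2 = m by omega, zero_add]

lemma support_one_add_X_mul_expand (g : Polynomial (ZMod 2)) :
    ((1 + X) * Polynomial.expand (ZMod 2) 2 g).support.card = 2 * g.support.card := by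
  have hsup : ((1 + X) * Polynomial.expand (ZMod 2) 2 g).support
      = g.support.image (2 * ·) ∪ g.support.image (fun m => 2 * m + 1) := by
    ext n
    simp only [Polynomial.mem_support_iff, Finset.mem_union, Finset.mem_image,
      coeff_one_add_X_mul_expand]
    constructor
    · intro h
      rcases Nat.even_or_odd n with ⟨m, rfl⟩ | ⟨m, rfl⟩
      · exact Or.inl ⟨(m + m) / 2, by simpa using h, by omega⟩
      · exact Or.inr ⟨m, by simpa [show (2 * m + 1) / 2 = m by omega] using h, rfl⟩
    · rintro (⟨m, hm, rfl⟩ | ⟨m, hm, rfl⟩)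
      · simpa [show 2 * m / 2 = m by omega] using hm
      · simpa [show (2 * m + 1) / 2 = m by omega] using hm
  rw [hsup, Finset.card_union_of_disjoint, Finset.card_image_of_injective _ (fun a b h => by omega),
    Finset.card_image_of_injective _ (fun a b h => by omega)]
  · ring
  · rw [Finset.disjoint_left]
    rintro n hn hn'
    simp only [Finset.mem_image] at hn hn'
    obtain ⟨a, _, rfl⟩ := hn
    obtain ⟨b, _, hb⟩ := hn'
    omega

theorem support_card_pow_one_add_X (i : ℕ) :
    ((1 + X : Polynomial (ZMod 2)) ^ i).support.card = 2 ^ ((Nat.digits 2 i).count 1) := by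
  induction i using Nat.strong_induction_on with
  | _ i ih =>
    rcases Nat.eq_zero_or_pos i with rfl | hi
    · rw [pow_zero, ← Polynomial.C_1, Polynomial.support_C one_ne_zero]
      simp
    have hdig : Nat.digits 2 i = i % 2 :: Nat.digits 2 (i / 2) :=
      Nat.digits_def' (by norm_num) hi
    have key : (1 + X : Polynomial (ZMod 2)) ^ i
        = (1 + X) ^ (i % 2) * Polynomial.expand (ZMod 2) 2 ((1 + X) ^ (i / 2)) := by
      rw [expand_two_eq_sq, ← pow_mul, ← pow_add]
      congr 1
      omega
    have ihd := ih (i / 2) (by omega)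
    rcases Nat.even_or_odd i with he | ho
    · have h2 : i % 2 = 0 := Nat.even_iff.mp he
      rw [key, h2, pow_zero, one_mul, support_expand_two,
        Finset.card_image_of_injective _ (fun a b h => by omega), ihd, hdig, h2]
      simp
    · have h2 : i % 2 = 1 := Nat.odd_iff.mp ho
      rw [key, h2, pow_one, support_one_add_X_mul_expand, ihd, hdig, h2]
      simp [pow_succ, mul_comm]
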